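/- The set Ω := {(τ,z) ∈ Mat_{g×g}(ℂ) × ℂ^g : Im τ + (Im τ)ᵀ is a positive definite real matrix} is open in Mat_{g×g}(ℂ) × ℂ^g, and the function F(τ,z) := ∑_{n∈ℤ^g} exp(πi(nᵀτn + 2nᵀz)) is holomorphic (complex differentiable) on Ω. Since Ω contains H_g × ℂ^g, the Riemann theta function θ is a holomorphic function of (τ,z) ∈ H_g × ℂ^g. -/

import Mathlib

open scoped Matrix
open Matrix Finset

attribute [local instance] Matrix.seminormedAddCommGroup Matrix.normedAddCommGroup Matrix.normedSpace

noncomputable section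

/-- The theta series as a function of the pair `(τ, z)`. -/
noncomputable def thetaFun (g : ℕ) (p : Matrix (Fin g) (Fin g) ℂ × (Fin g → ℂ)) : ℂ :=
  ∑' n : Fin g → ℤ,
    Complex.exp ((Real.pi : ℂ) * Complex.I *
      ((fun i => (n i : ℂ)) ⬝ᵥ p.1.mulVec (fun i => (n i : ℂ)) +
        2 * ((fun i => (n i : ℂ)) ⬝ᵥ p.2)))

/-- The open domain `Ω`: pairs `(τ, z)` such that `Im τ + (Im τ)ᵀ` is positive definite. -/
def thetaDomain (g : ℕ) : Set (Matrix (Fin g) (Fin g) ℂ × (Fin g → ℂ)) :=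
  {p | (Matrix.of fun i j => (p.1 i j).im + (p.1 j i).im).PosDef}

/-- sum of absolute values of an integer vector, as a real number -/
def intAbsSum {g : ℕ} (n : Fin g → ℤ) : ℝ := ∑ i, |(n i : ℝ)|

lemma summable_exp_neg_abs_int (a : ℝ) (ha : 0 < a) :
    Summable (fun k : ℤ => Real.exp (-a * |(k : ℝ)|)) := by
  have hnat : Summable (fun n : ℕ => Real.exp (-a * n)) := by
    have : (fun n : ℕ => Real.exp (-a * n)) = fun n : ℕ => (Real.exp (-a)) ^ n := by
      ext n
      rw [← Real.exp_nat_mul]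
      ring_nf
    rw [this]
    exact summable_geometric_of_lt_one (Real.exp_nonneg _)
      (Real.exp_lt_one_iff.2 (by linarith))
  apply Summable.of_nat_of_neg
  · refine hnat.congr fun n => ?_
    simp
  · refine hnat.congr fun n => ?_
    simp

lemma summable_exp_neg_intAbsSum (g : ℕ) (a : ℝ) (ha : 0 < a) :
    Summable (fun n : Fin g → ℤ => Real.exp (-a * intAbsSum n)) := by
  induction g with
  | zero =>
      exact .of_finite
  | succ g ih =>
      rw [← (Fin.consEquiv (fun _ : Fin (g+1) => ℤ)).summable_iff]
      have : ((fun n : Fin (g+1) → ℤ => Real.exp (-a * intAbsSum n)) ∘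
          (Fin.consEquiv (fun _ : Fin (g+1) => ℤ))) =
          fun x : ℤ × (Fin g → ℤ) =>
            Real.exp (-a * |(x.1 : ℝ)|) * Real.exp (-a * intAbsSum x.2) := by
        ext x
        rw [← Real.exp_add]
        simp only [Function.comp_apply, Fin.consEquiv_apply, intAbsSum, Fin.sum_univ_succ,
          Fin.cons_zero, Fin.cons_succ]
        ring_nf
      rw [this]
      exact (summable_exp_neg_abs_int a ha).mul_of_nonneg ih
        (fun _ => Real.exp_nonneg _) (fun _ => Real.exp_nonneg _)

/-- sup-norm of an integer vector viewed as a real vector -/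
def intVecNorm {g : ℕ} (n : Fin g → ℤ) : ℝ := ‖(fun i => (n i : ℝ) : Fin g → ℝ)‖

lemma intAbsSum_le {g : ℕ} (n : Fin g → ℤ) : intAbsSum n ≤ g * intVecNorm n := by
  have : ∀ i, |(n i : ℝ)| ≤ intVecNorm n := by
    intro i
    simpa [Real.norm_eq_abs, intVecNorm] using norm_le_pi_norm (fun i => (n i : ℝ)) i
  calc intAbsSum n ≤ ∑ _i : Fin g, intVecNorm n := Finset.sum_le_sum fun i _ => this i
    _ = g * intVecNorm n := by simp [mul_comm]

lemma summable_exp_quad (g : ℕ) (a b : ℝ) (ha : 0 < a) :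
    Summable (fun n : Fin g → ℤ =>
      Real.exp (-a * intVecNorm n ^ 2 + b * intVecNorm n)) := by
  rcases Nat.eq_zero_or_pos g with h | hg
  · subst h; exact .of_finite
  set C : ℝ := (b + 1) ^ 2 / (4 * a) with hC
  refine Summable.of_nonneg_of_le (fun n => Real.exp_nonneg _) (fun n => ?_)
    (((summable_exp_neg_intAbsSum g (1 / g) (by positivity)).mul_left (Real.exp C)))
  · 
    set m := intVecNorm n with hm
    have hm0 : 0 ≤ m := norm_nonneg _
    have h1 : -a * m ^ 2 + b * m ≤ C + -m := by
      have h4a : 0 < 4 * a := by linarith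
      have key : 0 ≤ (2 * a * m - (b + 1)) ^ 2 := sq_nonneg _
      have hCa : C * (4 * a) = (b + 1) ^ 2 := by rw [hC]; field_simp
      nlinarith [key, hCa, h4a]
    have h2 : -m ≤ -(1 / (g : ℝ)) * intAbsSum n := by
      have hgpos : (0 : ℝ) < g := by exact_mod_cast hg
      have := intAbsSum_le n
      rw [neg_mul, neg_le_neg_iff, div_mul_eq_mul_div, one_mul, div_le_iff₀ hgpos]
      linarith [this]
    calc Real.exp (-a * m ^ 2 + b * m) ≤ Real.exp (C + -m) := Real.exp_le_exp.2 h1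
      _ ≤ Real.exp (C + -(1 / (g : ℝ)) * intAbsSum n) := Real.exp_le_exp.2 (by linarith)
      _ = Real.exp C * Real.exp (-(1 / (g : ℝ)) * intAbsSum n) := Real.exp_add _ _

lemma norm_dotProduct_le {𝕜 : Type*} [RCLike 𝕜] {g : ℕ} (x y : Fin g → 𝕜) :
    ‖x ⬝ᵥ y‖ ≤ g * ‖x‖ * ‖y‖ := by
  calc ‖x ⬝ᵥ y‖ ≤ ∑ i : Fin g, ‖x i * y i‖ := norm_sum_le _ _
    _ ≤ ∑ _i : Fin g, ‖x‖ * ‖y‖ := Finset.sum_le_sum fun i _ => by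
        rw [norm_mul]
        exact mul_le_mul (norm_le_pi_norm x i) (norm_le_pi_norm y i) (norm_nonneg _)
          (norm_nonneg _)
    _ = g * ‖x‖ * ‖y‖ := by simp [mul_assoc]

lemma norm_mulVec_le {𝕜 : Type*} [RCLike 𝕜] {g : ℕ} (M : Matrix (Fin g) (Fin g) 𝕜)
    (y : Fin g → 𝕜) : ‖M *ᵥ y‖ ≤ g * ‖M‖ * ‖y‖ := by
  rcases Nat.eq_zero_or_pos g with h | hg
  · subst h
    simp [Subsingleton.elim (M *ᵥ y) 0]
  refine (pi_norm_le_iff_of_nonneg (by positivity)).2 fun i => ?_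
  calc ‖(M *ᵥ y) i‖ = ‖(fun j => M i j) ⬝ᵥ y‖ := rfl
    _ ≤ g * ‖fun j => M i j‖ * ‖y‖ := norm_dotProduct_le _ _
    _ ≤ g * ‖M‖ * ‖y‖ := by
        have h1 : ‖fun j => M i j‖ ≤ ‖M‖ := by
          refine (pi_norm_le_iff_of_nonneg (norm_nonneg _)).2 fun j => ?_
          exact Matrix.norm_entry_le_entrywise_sup_norm M
        exact mul_le_mul_of_nonneg_right
          (mul_le_mul_of_nonneg_left h1 (by positivity)) (norm_nonneg y)

lemma norm_dot_mulVec_le {𝕜 : Type*} [RCLike 𝕜] {g : ℕ} (x y : Fin g → 𝕜)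
    (M : Matrix (Fin g) (Fin g) 𝕜) : ‖x ⬝ᵥ M *ᵥ y‖ ≤ g^2 * ‖x‖ * ‖M‖ * ‖y‖ := by
  calc ‖x ⬝ᵥ M *ᵥ y‖ ≤ g * ‖x‖ * ‖M *ᵥ y‖ := norm_dotProduct_le _ _
    _ ≤ g * ‖x‖ * (g * ‖M‖ * ‖y‖) := by
        have := norm_mulVec_le M y
        have h0 : (0:ℝ) ≤ g * ‖x‖ := by positivity
        exact mul_le_mul_of_nonneg_left this h0
    _ = g^2 * ‖x‖ * ‖M‖ * ‖y‖ := by ring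

section

/-- the norm topology on matrices, reducibly -/
abbrev thetaMatTop (g : ℕ) : TopologicalSpace (Matrix (Fin g) (Fin g) ℂ) :=
  PseudoMetricSpace.toUniformSpace.toTopologicalSpace

attribute [local instance] thetaMatTop

/-- The exponent of the theta series, as a continuous linear map in `(τ, z)`. -/
noncomputable def thetaLin (g : ℕ) (n : Fin g → ℤ) :
    (Matrix (Fin g) (Fin g) ℂ × (Fin g → ℂ)) →L[ℂ] ℂ :=
  LinearMap.toContinuousLinearMap
  { toFun := fun p => (Real.pi : ℂ) * Complex.I *
      ((fun i => (n i : ℂ)) ⬝ᵥ p.1.mulVec (fun i => (n i : ℂ)) +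
        2 * ((fun i => (n i : ℂ)) ⬝ᵥ p.2))
    map_add' := by
      intro p q
      simp only [Prod.fst_add, Prod.snd_add, Matrix.add_mulVec, dotProduct_add]
      ring
    map_smul' := by
      intro c p
      simp only [Prod.smul_fst, Prod.smul_snd, Matrix.smul_mulVec, dotProduct_smul,
        smul_eq_mul, RingHom.id_apply]
      ring }

lemma thetaLin_apply (g : ℕ) (n : Fin g → ℤ) (p : Matrix (Fin g) (Fin g) ℂ × (Fin g → ℂ)) :
    thetaLin g n p = (Real.pi : ℂ) * Complex.I *
      ((fun i => (n i : ℂ)) ⬝ᵥ p.1.mulVec (fun i => (n i : ℂ)) +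
        2 * ((fun i => (n i : ℂ)) ⬝ᵥ p.2)) := rfl

lemma norm_intVecC (g : ℕ) (n : Fin g → ℤ) :
    ‖(fun i => (n i : ℂ) : Fin g → ℂ)‖ = intVecNorm n := by
  unfold intVecNorm
  simp only [Pi.norm_def]
  congr 1
  refine Finset.sup_congr rfl fun i _ => ?_
  ext
  rw [coe_nnnorm, coe_nnnorm, ← Complex.ofReal_intCast, Complex.norm_real]

lemma thetaLin_opNorm (g : ℕ) (n : Fin g → ℤ) :
    ‖thetaLin g n‖ ≤
      Real.pi * (g^2 * intVecNorm n^2 + 2 * g * intVecNorm n) := by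
  have hm : (0:ℝ) ≤ intVecNorm n := norm_nonneg _
  refine ContinuousLinearMap.opNorm_le_bound _ (by positivity) fun p => ?_
  rw [thetaLin_apply]
  have hA : ‖(fun i => (n i : ℂ)) ⬝ᵥ p.1.mulVec (fun i => (n i : ℂ))‖ ≤
      g^2 * intVecNorm n^2 * ‖p.1‖ := by
    have := norm_dot_mulVec_le (fun i => (n i : ℂ)) (fun i => (n i : ℂ)) p.1
    rw [norm_intVecC] at this
    calc _ ≤ (g:ℝ)^2 * intVecNorm n * ‖p.1‖ * intVecNorm n := this
      _ = g^2 * intVecNorm n^2 * ‖p.1‖ := by ring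
  have hB : ‖(fun i => (n i : ℂ)) ⬝ᵥ p.2‖ ≤ g * intVecNorm n * ‖p.2‖ := by
    have := norm_dotProduct_le (fun i => (n i : ℂ)) p.2
    rwa [norm_intVecC] at this
  have h1 : ‖p.1‖ ≤ ‖p‖ := norm_fst_le p
  have h2 : ‖p.2‖ ≤ ‖p‖ := norm_snd_le p
  have hp : (0:ℝ) ≤ ‖p‖ := norm_nonneg _
  calc ‖(Real.pi : ℂ) * Complex.I * _‖
      = Real.pi * ‖(fun i => (n i : ℂ)) ⬝ᵥ p.1.mulVec (fun i => (n i : ℂ)) +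
          2 * ((fun i => (n i : ℂ)) ⬝ᵥ p.2)‖ := by
        rw [norm_mul, norm_mul, Complex.norm_real, Complex.norm_I, Real.norm_eq_abs,
          abs_of_nonneg Real.pi_pos.le, mul_one]
    _ ≤ Real.pi * (g^2 * intVecNorm n^2 * ‖p.1‖ + 2 * (g * intVecNorm n * ‖p.2‖)) := by
        refine mul_le_mul_of_nonneg_left ?_ Real.pi_pos.le
        refine (norm_add_le _ _).trans ?_
        gcongr
        rw [norm_mul]
        simp only [Complex.norm_ofNat]
        gcongr
    _ ≤ Real.pi * (g^2 * intVecNorm n^2 + 2 * g * intVecNorm n) * ‖p‖ := by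
        rw [mul_assoc, mul_comm _ (‖p‖), ← mul_assoc]
        ring_nf
        nlinarith [mul_le_mul_of_nonneg_left h1 (by positivity : (0:ℝ) ≤ (g:ℝ)^2 * intVecNorm n^2),
          mul_le_mul_of_nonneg_left h2 (by positivity : (0:ℝ) ≤ 2 * g * intVecNorm n),
          Real.pi_pos.le]

lemma re_thetaLin (g : ℕ) (n : Fin g → ℤ) (p : Matrix (Fin g) (Fin g) ℂ × (Fin g → ℂ)) :
    (thetaLin g n p).re =
    -Real.pi * (((fun i => (n i : ℝ)) ⬝ᵥ (Matrix.of fun i j => (p.1 i j).im) *ᵥ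
        (fun i => (n i : ℝ))) + 2 * ((fun i => (n i : ℝ)) ⬝ᵥ fun i => (p.2 i).im)) := by
  rw [thetaLin_apply]
  have him : ((fun i => (n i : ℂ)) ⬝ᵥ p.1.mulVec (fun i => (n i : ℂ)) +
        2 * ((fun i => (n i : ℂ)) ⬝ᵥ p.2)).im =
      ((fun i => (n i : ℝ)) ⬝ᵥ (Matrix.of fun i j => (p.1 i j).im) *ᵥ
        (fun i => (n i : ℝ))) + 2 * ((fun i => (n i : ℝ)) ⬝ᵥ fun i => (p.2 i).im) := by
    simp only [dotProduct, mulVec, Matrix.of_apply, ← Complex.ofReal_intCast,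
      Complex.add_im, Complex.im_sum, Complex.ofReal_mul, Complex.mul_im, Complex.ofReal_re,
      Complex.ofReal_im, Complex.mul_re, Complex.im_ofNat, Complex.re_ofNat, Complex.re_sum,
      Finset.mul_sum, zero_mul, mul_zero, add_zero, sub_zero, zero_add]
  rw [Complex.mul_re]
  simp only [Complex.mul_re, Complex.mul_im, Complex.I_re, Complex.I_im, Complex.ofReal_re,
    Complex.ofReal_im, mul_zero, mul_one, zero_mul, zero_sub, sub_zero, zero_add, add_zero]
  rw [him]
  ring

lemma quad_smul {g : ℕ} (a : ℝ) (x : Fin g → ℝ) (S : Matrix (Fin g) (Fin g) ℝ) :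
    (a • x) ⬝ᵥ S *ᵥ (a • x) = a^2 * (x ⬝ᵥ S *ᵥ x) := by
  rw [smul_dotProduct, Matrix.mulVec_smul, dotProduct_smul, smul_eq_mul, smul_eq_mul]
  ring

lemma quad_sym {g : ℕ} (x : Fin g → ℝ) (A : Matrix (Fin g) (Fin g) ℝ) :
    x ⬝ᵥ (Matrix.of fun i j => A i j + A j i) *ᵥ x = 2 * (x ⬝ᵥ A *ᵥ x) := by
  simp only [dotProduct, mulVec, Matrix.of_apply, add_mul, mul_add,
    Finset.sum_add_distrib, Finset.mul_sum, two_mul]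
  congr 1
  rw [Finset.sum_comm]
  exact Finset.sum_congr rfl fun i _ => Finset.sum_congr rfl fun j _ => by ring

lemma quad_sub {g : ℕ} (x : Fin g → ℝ) (S T : Matrix (Fin g) (Fin g) ℝ) :
    x ⬝ᵥ S *ᵥ x = x ⬝ᵥ T *ᵥ x + x ⬝ᵥ (S - T) *ᵥ x := by
  rw [Matrix.sub_mulVec, dotProduct_sub]
  ring

lemma continuous_quad {g : ℕ} (S : Matrix (Fin g) (Fin g) ℝ) :
    Continuous fun x : Fin g → ℝ => x ⬝ᵥ S *ᵥ x := by
  simp only [dotProduct, mulVec]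
  exact continuous_finset_sum _ fun i _ =>
    (continuous_apply i).mul (continuous_finset_sum _ fun j _ =>
      (continuous_const.mul (continuous_apply j)))

/-- a positive definite real matrix admits a uniform quadratic lower bound -/
lemma posdef_lower {g : ℕ} {S : Matrix (Fin g) (Fin g) ℝ} (hS : S.PosDef) :
    ∃ c > 0, ∀ x : Fin g → ℝ, c * ‖x‖^2 ≤ x ⬝ᵥ S *ᵥ x := by
  rcases Nat.eq_zero_or_pos g with h | hg
  · subst h
    refine ⟨1, one_pos, fun x => ?_⟩
    have h0 : ‖x‖ = 0 := by rw [Subsingleton.elim x 0, norm_zero]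
    rw [h0]
    simp [dotProduct]
  haveI : Nonempty (Fin g) := ⟨⟨0, hg⟩⟩
  have hne : (Metric.sphere (0 : Fin g → ℝ) 1).Nonempty := by
    apply NormedSpace.sphere_nonempty.2
    norm_num
  obtain ⟨u, hu, humin⟩ := (isCompact_sphere (0 : Fin g → ℝ) 1).exists_isMinOn hne
    (continuous_quad S).continuousOn
  have hu1 : ‖u‖ = 1 := by simpa using hu
  have hu0 : u ≠ 0 := by
    intro h; rw [h] at hu1; simp at hu1
  have hc : 0 < u ⬝ᵥ S *ᵥ u := by
    have := hS.dotProduct_mulVec_pos hu0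
    simpa using this
  refine ⟨u ⬝ᵥ S *ᵥ u, hc, fun x => ?_⟩
  rcases eq_or_ne x 0 with rfl | hx
  · simp
  · have hxn : 0 < ‖x‖ := norm_pos_iff.2 hx
    have hmem : ‖x‖⁻¹ • x ∈ Metric.sphere (0 : Fin g → ℝ) 1 := by
      simp [norm_smul, abs_of_pos (inv_pos.2 hxn), inv_mul_cancel₀ hxn.ne']
    have hge := humin hmem
    have hquad : (‖x‖⁻¹ • x) ⬝ᵥ S *ᵥ (‖x‖⁻¹ • x) = (‖x‖⁻¹)^2 * (x ⬝ᵥ S *ᵥ x) :=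
      quad_smul _ _ _
    have : u ⬝ᵥ S *ᵥ u ≤ (‖x‖⁻¹)^2 * (x ⬝ᵥ S *ᵥ x) := by
      rw [← hquad]; exact hge
    calc (u ⬝ᵥ S *ᵥ u) * ‖x‖^2 ≤ ((‖x‖⁻¹)^2 * (x ⬝ᵥ S *ᵥ x)) * ‖x‖^2 :=
          mul_le_mul_of_nonneg_right this (by positivity)
      _ = x ⬝ᵥ S *ᵥ x := by
          field_simp

/-- stability of the lower bound under perturbation -/
lemma posdef_perturb {g : ℕ} {S₀ : Matrix (Fin g) (Fin g) ℝ} (hS : S₀.PosDef) :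
    ∃ c > 0, ∃ ε > 0, ∀ S : Matrix (Fin g) (Fin g) ℝ, ‖S - S₀‖ < ε →
      ∀ x : Fin g → ℝ, c * ‖x‖^2 ≤ x ⬝ᵥ S *ᵥ x := by
  obtain ⟨c, hc, hlow⟩ := posdef_lower hS
  set ε := (c/2) / ((g:ℝ)^2 + 1) with hε
  refine ⟨c/2, by positivity, ε, by positivity, fun S hS' x => ?_⟩
  have hbound : ‖x ⬝ᵥ (S - S₀) *ᵥ x‖ ≤ (g:ℝ)^2 * ‖x‖ * ‖S - S₀‖ * ‖x‖ :=
    norm_dot_mulVec_le x x (S - S₀)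
  rw [quad_sub x S S₀]
  have h1 : c * ‖x‖^2 ≤ x ⬝ᵥ S₀ *ᵥ x := hlow x
  have habs : |x ⬝ᵥ (S - S₀) *ᵥ x| ≤ (g:ℝ)^2 * ‖x‖^2 * ε := by
    rw [← Real.norm_eq_abs]
    refine hbound.trans ?_
    have h0 : (0:ℝ) ≤ (g:ℝ)^2 * ‖x‖ := by positivity
    calc (g:ℝ)^2 * ‖x‖ * ‖S - S₀‖ * ‖x‖ ≤ (g:ℝ)^2 * ‖x‖ * ε * ‖x‖ := by
          exact mul_le_mul_of_nonneg_right (mul_le_mul_of_nonneg_left hS'.le h0)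
            (norm_nonneg x)
      _ = (g:ℝ)^2 * ‖x‖^2 * ε := by ring
  have hεle : (g:ℝ)^2 * ε ≤ c/2 := by
    rw [hε, mul_comm, div_mul_eq_mul_div, div_le_iff₀ (by positivity : (0:ℝ) < (g:ℝ)^2 + 1)]
    nlinarith [hc]
  have hlow2 := (abs_le.1 habs).1
  nlinarith [h1, hlow2, sq_nonneg ‖x‖, hεle, norm_nonneg x]

/-- imaginary-part symmetrization of the matrix component -/
def imSym {g : ℕ} (p : Matrix (Fin g) (Fin g) ℂ × (Fin g → ℂ)) :
    Matrix (Fin g) (Fin g) ℝ :=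
  Matrix.of fun i j => (p.1 i j).im + (p.1 j i).im

lemma quad_imSym {g : ℕ} (p : Matrix (Fin g) (Fin g) ℂ × (Fin g → ℂ)) (x : Fin g → ℝ) :
    x ⬝ᵥ imSym p *ᵥ x = 2 * (x ⬝ᵥ (Matrix.of fun i j => (p.1 i j).im) *ᵥ x) :=
  quad_sym x (Matrix.of fun i j => (p.1 i j).im)

lemma imSym_isHermitian {g : ℕ} (p : Matrix (Fin g) (Fin g) ℂ × (Fin g → ℂ)) :
    (imSym p).IsHermitian := by
  ext i j
  simp [imSym, Matrix.conjTranspose_apply, add_comm]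

lemma continuous_imSym (g : ℕ) :
    Continuous (imSym (g := g)) := by
  apply continuous_pi
  intro i
  apply continuous_pi
  intro j
  simp only [imSym, Matrix.of_apply]
  fun_prop

lemma norm_im_part_le {g : ℕ} (z : Fin g → ℂ) :
    ‖(fun i => (z i).im : Fin g → ℝ)‖ ≤ ‖z‖ := by
  refine (pi_norm_le_iff_of_nonneg (norm_nonneg _)).2 fun i => ?_
  calc ‖(z i).im‖ ≤ ‖z i‖ := by
        rw [Real.norm_eq_abs]; exact Complex.abs_im_le_norm (z i)
    _ ≤ ‖z‖ := by exact norm_le_pi_norm z i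

/-- The theta domain (restated here to have it available before the main theorem). -/
def thetaDomain' (g : ℕ) : Set (Matrix (Fin g) (Fin g) ℂ × (Fin g → ℂ)) :=
  {p | (imSym p).PosDef}

/-- main local estimate around a point of the theta domain -/
lemma key_ball (g : ℕ) {p₀ : Matrix (Fin g) (Fin g) ℂ × (Fin g → ℂ)}
    (hp₀ : p₀ ∈ thetaDomain' g) :
    ∃ r > 0, ∃ a > 0, ∃ b : ℝ,
      Metric.closedBall p₀ r ⊆ thetaDomain' g ∧
      ∀ p ∈ Metric.closedBall p₀ r, ∀ n : Fin g → ℤ,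
        (thetaLin g n p).re ≤ -a * intVecNorm n ^ 2 + b * intVecNorm n := by
  obtain ⟨c, hc, ε, hε, H⟩ := posdef_perturb hp₀
  obtain ⟨δ, hδ, hδc⟩ := Metric.continuousAt_iff.1 (continuous_imSym g).continuousAt ε hε
  set r := δ / 2 with hr
  have hrpos : 0 < r := by positivity
  set M := ‖p₀‖ + r with hM
  have hM0 : 0 ≤ M := by positivity
  have hball : ∀ p ∈ Metric.closedBall p₀ r, ∀ x : Fin g → ℝ,
      c * ‖x‖ ^ 2 ≤ x ⬝ᵥ imSym p *ᵥ x := by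
    intro p hp x
    have hd : dist p p₀ < δ := lt_of_le_of_lt (Metric.mem_closedBall.1 hp) (by linarith)
    have := hδc hd
    rw [dist_eq_norm] at this
    exact H _ this x
  refine ⟨r, hrpos, Real.pi * c / 2, by positivity, 2 * Real.pi * g * M, ?_, ?_⟩
  · intro p hp
    refine Matrix.PosDef.of_dotProduct_mulVec_pos (imSym_isHermitian p) fun x hx => ?_
    have hq := hball p hp x
    have hxn : 0 < ‖x‖ := norm_pos_iff.2 hx
    have : (0:ℝ) < c * ‖x‖ ^ 2 := by positivity
    have hstar : star x = x := by
      funext i; simp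
    rw [hstar]
    exact lt_of_lt_of_le this hq
  · intro p hp n
    set m := intVecNorm n with hmdef
    have hm0 : 0 ≤ m := norm_nonneg _
    rw [re_thetaLin]
    set Q : ℝ := (fun i => (n i : ℝ)) ⬝ᵥ (Matrix.of fun i j => (p.1 i j).im) *ᵥ
      (fun i => (n i : ℝ)) with hQ
    set D : ℝ := (fun i => (n i : ℝ)) ⬝ᵥ (fun i => (p.2 i).im) with hD
    have hQlow : c * m ^ 2 ≤ 2 * Q := by
      have h := hball p hp (fun i => (n i : ℝ))
      rw [quad_imSym] at h
      exact h
    have hzM : ‖p.2‖ ≤ M := by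
      have h1 : ‖p.2‖ ≤ ‖p‖ := norm_snd_le p
      have h2 : ‖p‖ ≤ ‖p₀‖ + r := by
        have := Metric.mem_closedBall.1 hp
        rw [dist_eq_norm] at this
        have habel : p₀ + (p - p₀) = p := by abel
        calc ‖p‖ = ‖p₀ + (p - p₀)‖ := by rw [habel]
          _ ≤ ‖p₀‖ + ‖p - p₀‖ := norm_add_le _ _
          _ ≤ ‖p₀‖ + r := by linarith
      linarith
    have hDabs : |D| ≤ g * m * M := by
      rw [← Real.norm_eq_abs, hD]
      calc ‖(fun i => (n i : ℝ)) ⬝ᵥ (fun i => (p.2 i).im)‖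
          ≤ g * ‖(fun i => (n i : ℝ) : Fin g → ℝ)‖ * ‖(fun i => (p.2 i).im : Fin g → ℝ)‖ :=
            norm_dotProduct_le _ _
        _ ≤ g * m * M := by
            have h1 : ‖(fun i => (p.2 i).im : Fin g → ℝ)‖ ≤ M := (norm_im_part_le p.2).trans hzM
            have : ‖(fun i => (n i : ℝ) : Fin g → ℝ)‖ = m := rfl
            rw [this]
            exact mul_le_mul_of_nonneg_left h1 (by positivity)
    have e1 : Real.pi * (c * m ^ 2) ≤ Real.pi * (2 * Q) :=
      mul_le_mul_of_nonneg_left hQlow Real.pi_pos.le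
    have e2 : -(g * m * M) ≤ D := neg_le_of_abs_le hDabs
    have e3 : Real.pi * (-(g * m * M)) ≤ Real.pi * D :=
      mul_le_mul_of_nonneg_left e2 Real.pi_pos.le
    clear_value r M m Q D
    linarith [e1, e3]

/-- summability of the derivative bounds -/
lemma summable_deriv_bound (g : ℕ) (a b : ℝ) (ha : 0 < a) :
    Summable (fun n : Fin g → ℤ =>
      Real.pi * ((g:ℝ)^2 * intVecNorm n ^ 2 + 2 * g * intVecNorm n) *
        Real.exp (-a * intVecNorm n ^ 2 + b * intVecNorm n)) := by
  refine Summable.of_nonneg_of_le (fun n => mul_nonneg (mul_nonneg Real.pi_pos.le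
      (add_nonneg (mul_nonneg (by positivity) (sq_nonneg _))
        (mul_nonneg (by positivity) (norm_nonneg _)))) (Real.exp_nonneg _)) (fun n => ?_)
    ((summable_exp_quad g a (b + 2) ha).mul_left (Real.pi * ((g:ℝ)^2 + 2 * g)))
  set m := intVecNorm n with hm
  have hm0 : 0 ≤ m := norm_nonneg _
  have h1 : (g:ℝ)^2 * m ^ 2 + 2 * g * m ≤ ((g:ℝ)^2 + 2 * g) * (m + 1)^2 := by nlinarith
  have h2 : (m + 1)^2 ≤ Real.exp (2 * m) := by
    have h3 : m + 1 ≤ Real.exp m := Real.add_one_le_exp m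
    calc (m + 1)^2 ≤ (Real.exp m)^2 := by nlinarith [Real.exp_nonneg m]
      _ = Real.exp (2 * m) := by rw [← Real.exp_nat_mul]; norm_num [mul_comm]
  calc Real.pi * ((g:ℝ)^2 * m ^ 2 + 2 * g * m) * Real.exp (-a * m ^ 2 + b * m)
      ≤ Real.pi * (((g:ℝ)^2 + 2 * g) * Real.exp (2 * m)) * Real.exp (-a * m ^ 2 + b * m) := by
        have := h1.trans (mul_le_mul_of_nonneg_left h2 (by positivity))
        have hπ := Real.pi_pos.le
        have hE := Real.exp_nonneg (-a * m ^ 2 + b * m)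
        exact mul_le_mul_of_nonneg_right (mul_le_mul_of_nonneg_left this hπ) hE
    _ = Real.pi * ((g:ℝ)^2 + 2 * g) * Real.exp (-a * m ^ 2 + (b + 2) * m) := by
        rw [mul_assoc, mul_assoc, ← Real.exp_add]
        ring_nf

lemma thetaFun_eq (g : ℕ) (p : Matrix (Fin g) (Fin g) ℂ × (Fin g → ℂ)) :
    thetaFun g p = ∑' n : Fin g → ℤ, Complex.exp (thetaLin g n p) := rfl

theorem theta_holomorphic' (g : ℕ) :
    IsOpen (thetaDomain' g) ∧ DifferentiableOn ℂ (thetaFun g) (thetaDomain' g) := by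
  constructor
  · refine Metric.isOpen_iff.2 ?_
    intro p₀ hp₀
    obtain ⟨r, hr, a, ha, b, hsub, _⟩ := key_ball g hp₀
    exact ⟨r, hr, (Metric.ball_subset_closedBall).trans hsub⟩
  · intro p₀ hp₀
    obtain ⟨r, hr, a, ha, b, hsub, hbd⟩ := key_ball g hp₀
    -- term functions and their derivatives
    set f : (Fin g → ℤ) → (Matrix (Fin g) (Fin g) ℂ × (Fin g → ℂ)) → ℂ :=
      fun n p => Complex.exp (thetaLin g n p) with hf
    set f' : (Fin g → ℤ) → (Matrix (Fin g) (Fin g) ℂ × (Fin g → ℂ)) →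
        ((Matrix (Fin g) (Fin g) ℂ × (Fin g → ℂ)) →L[ℂ] ℂ) :=
      fun n p => Complex.exp (thetaLin g n p) • thetaLin g n with hf'
    have hterm : ∀ n p, HasFDerivAt (f n) (f' n p) p := fun n p =>
      (Complex.hasDerivAt_exp (thetaLin g n p)).comp_hasFDerivAt p
        (thetaLin g n).hasFDerivAt
    have hnorm : ∀ n, ∀ p ∈ Metric.closedBall p₀ r,
        ‖f n p‖ ≤ Real.exp (-a * intVecNorm n ^ 2 + b * intVecNorm n) := by
      intro n p hp
      rw [hf]
      simp only []
      rw [Complex.norm_exp]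
      exact Real.exp_le_exp.2 (hbd p hp n)
    have hnorm' : ∀ n, ∀ p ∈ Metric.closedBall p₀ r,
        ‖f' n p‖ ≤ Real.pi * ((g:ℝ)^2 * intVecNorm n ^ 2 + 2 * g * intVecNorm n) *
          Real.exp (-a * intVecNorm n ^ 2 + b * intVecNorm n) := by
      intro n p hp
      rw [hf']
      simp only []
      rw [norm_smul (Complex.exp (thetaLin g n p)) (thetaLin g n), Complex.norm_exp]
      rw [mul_comm]
      exact mul_le_mul (thetaLin_opNorm g n) (Real.exp_le_exp.2 (hbd p hp n))
        (Real.exp_nonneg _) (mul_nonneg Real.pi_pos.le (add_nonneg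
          (mul_nonneg (by positivity) (sq_nonneg _))
          (mul_nonneg (by positivity) (norm_nonneg _))))
    have hsummable : ∀ p ∈ Metric.closedBall p₀ r, Summable fun n => f n p := by
      intro p hp
      exact Summable.of_norm_bounded (summable_exp_quad g a b ha) (fun n => hnorm n p hp)
    have huc : TendstoUniformlyOn
        (fun (t : Finset (Fin g → ℤ)) p => ∑ n ∈ t, f' n p)
        (fun p => ∑' n, f' n p) Filter.atTop (Metric.ball p₀ r) := by
      apply TendstoUniformlyOn.mono _ Metric.ball_subset_closedBall
      exact tendstoUniformlyOn_tsum (summable_deriv_bound g a b ha)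
        (fun n p hp => hnorm' n p hp)
    have hdiff : HasFDerivAt (thetaFun g) (∑' n, f' n p₀) p₀ := by
      apply hasFDerivAt_of_tendstoUniformlyOn Metric.isOpen_ball huc
        (fun t p _ => HasFDerivAt.fun_sum fun n _ => hterm n p)
        (fun p hp => ?_) (Metric.mem_ball_self hr)
      rw [thetaFun_eq]
      exact (hsummable p (Metric.ball_subset_closedBall hp)).hasSum
    exact hdiff.differentiableAt.differentiableWithinAt

end

/-- `Ω` is open, the theta series defines a holomorphic function on `Ω`, and `Ω`
contains `H_g × ℂ^g`; hence the Riemann theta function is holomorphic on `H_g × ℂ^g`. -/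
theorem theta_holomorphic (g : ℕ) :
    IsOpen (thetaDomain g) ∧
      DifferentiableOn ℂ (thetaFun g) (thetaDomain g) ∧
      (∀ (τ : Matrix (Fin g) (Fin g) ℂ) (z : Fin g → ℂ), τ.IsSymm →
        (Matrix.of fun i j => (τ i j).im).PosDef → (τ, z) ∈ thetaDomain g) := by
  have hdom : thetaDomain g = thetaDomain' g := rfl
  obtain ⟨h1, h2⟩ := theta_holomorphic' g
  refine ⟨hdom ▸ h1, hdom ▸ h2, fun τ z _ hpos => ?_⟩
  show (imSym (τ, z)).PosDef
  refine Matrix.PosDef.of_dotProduct_mulVec_pos (imSym_isHermitian _) fun x hx => ?_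
  have hstar : star x = x := by funext i; simp
  rw [hstar, quad_imSym]
  have := hpos.dotProduct_mulVec_pos hx
  rw [show star x = x from by funext i; simp] at this
  positivity

end
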